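/- arXiv:1904.00916 — 9 statements merged into one kernel-verified Lean document; each statement's English description precedes it below -/
import Mathlib

section
/- Let M > 0 and 0 ≤ a < M. For any real constants E, Φ, Q with E ≠ 0, define R(r)/E² = r⁴ + (a² − Φ² − Q)r² + 2M((a − Φ)² + Q)r − a²Q. If the coefficient a² − Φ² − Q is nonnegative, then the polynomial r ↦ R(r)/E² cannot have two distinct roots r₁ < r₂ both greater than M + √(M² − a²) with R/E² ≥ 0 on (r₁, r₂) and R/E² < 0 immediately to the left of r₁. -/
/-- If the quadratic coefficient `a² − Φ² − Q` of the scaled Kerr radial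
potential is nonnegative, there is no root configuration `r₁ < r₂` beyond the horizon
with the potential nonnegative on `(r₁, r₂)` and negative immediately to the left of `r₁`. -/
theorem kerr_no_trapping_root_configuration
    (M a E Φ Q : ℝ) (hM : 0 < M) (ha0 : 0 ≤ a) (haM : a < M) (hE : E ≠ 0)
    (p : ℝ → ℝ)
    (hp : ∀ r, p r = r^4 + (a^2 - Φ^2 - Q) * r^2
        + 2 * M * ((a - Φ)^2 + Q) * r - a^2 * Q)
    (hcoeff : 0 ≤ a^2 - Φ^2 - Q) :
    ¬ ∃ r₁ r₂ : ℝ, r₁ < r₂ ∧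
      M + Real.sqrt (M^2 - a^2) < r₁ ∧ M + Real.sqrt (M^2 - a^2) < r₂ ∧
      p r₁ = 0 ∧ p r₂ = 0 ∧
      (∀ r ∈ Set.Ioo r₁ r₂, 0 ≤ p r) ∧
      (∃ δ > 0, ∀ r ∈ Set.Ioo (r₁ - δ) r₁, p r < 0) := by
  rintro ⟨r₁, r₂, h12, h1, h2, hp1, hp2, hnn, -⟩
  set c := a^2 - Φ^2 - Q with hc
  set d := 2 * M * ((a - Φ)^2 + Q) with hd
  set e := a^2 * Q with he
  -- p is convex
  have hconv : ConvexOn ℝ (Set.univ : Set ℝ) p := by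
    have h4 : ConvexOn ℝ (Set.univ : Set ℝ) (fun r : ℝ => r ^ 4) :=
      Even.convexOn_pow ⟨2, by norm_num⟩
    have hsq : ConvexOn ℝ (Set.univ : Set ℝ) (fun r : ℝ => r ^ 2) :=
      Even.convexOn_pow ⟨1, by norm_num⟩
    have h2' : ConvexOn ℝ (Set.univ : Set ℝ) (fun r : ℝ => c * r ^ 2) := by
      have := hsq.smul hcoeff
      simpa [smul_eq_mul] using this
    have haff : ConvexOn ℝ (Set.univ : Set ℝ) (fun r : ℝ => d * r - e) := by
      refine ⟨convex_univ, ?_⟩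
      intro x _ y _ s t hs ht hst
      simp only [smul_eq_mul]
      have : s * (d * x - e) + t * (d * y - e) = d * (s * x + t * y) - e := by
        linear_combination (-e) * hst
      linarith [this.ge]
    have hsum := (h4.add h2').add haff
    have hfun : p = fun r : ℝ => (r ^ 4 + c * r ^ 2) + (d * r - e) := by
      funext r; rw [hp r]; ring
    rw [hfun]; exact hsum
  -- p ≤ 0 on (r₁, r₂) by convexity, hence p = 0 there
  have hzero : ∀ y ∈ Set.Ioo r₁ r₂, p y = 0 := by
    intro y hy
    obtain ⟨hy1, hy2⟩ := hy
    have hΔ : (0:ℝ) < r₂ - r₁ := by linarith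
    set s := (r₂ - y) / (r₂ - r₁) with hs
    set t := (y - r₁) / (r₂ - r₁) with ht
    have hs0 : 0 ≤ s := div_nonneg (by linarith) (by linarith)
    have ht0 : 0 ≤ t := div_nonneg (by linarith) (by linarith)
    have hst : s + t = 1 := by
      rw [hs, ht, ← add_div, div_eq_one_iff_eq (by linarith : r₂ - r₁ ≠ 0)]
      ring
    have hyy : s • r₁ + t • r₂ = y := by
      rw [smul_eq_mul, smul_eq_mul, hs, ht]
      field_simp
      ring
    have hle := hconv.2 (Set.mem_univ r₁) (Set.mem_univ r₂) hs0 ht0 hst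
    rw [hyy] at hle
    simp only [smul_eq_mul, hp1, hp2, mul_zero, add_zero] at hle
    exact le_antisymm hle (hnn y ⟨hy1, hy2⟩)
  -- polynomial with infinitely many roots: contradiction
  set P : Polynomial ℝ :=
    Polynomial.X ^ 4 + Polynomial.C c * Polynomial.X ^ 2
      + Polynomial.C d * Polynomial.X - Polynomial.C e with hP
  have hP0 : P ≠ 0 := by
    intro h
    have h4 : P.coeff 4 = 0 := by rw [h]; simp
    rw [hP] at h4
    simp [Polynomial.coeff_X_pow, Polynomial.coeff_C] at h4
  have hroots : Set.Ioo r₁ r₂ ⊆ {x | P.IsRoot x} := by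
    intro y hy
    have : P.eval y = p y := by rw [hP, hp y]; simp [hc, hd, he]
    simp only [Set.mem_setOf_eq, Polynomial.IsRoot, this, hzero y hy]
  have hfin : {x | P.IsRoot x}.Finite := Polynomial.finite_setOf_isRoot hP0
  exact Set.Ioo_infinite h12 (hfin.subset hroots)
end

section
/- Let M > 0 and 0 < a < M. Set r̂₁ = 2M(1 + cos((2/3) arccos(−a/M))) and r̂₂ = 2M(1 + cos((2/3) arccos(a/M))). Then the function Φ_trap(r) = −(r³ − 3Mr² + a²r + a²M)/(a(r − M)) is strictly monotonically decreasing on [r̂₁, r̂₂]. -/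
/-- `Φ_trap` is strictly decreasing on the spherical photon orbit range. -/
theorem kerr_Phi_trap_strictAntiOn
    (M a : ℝ) (hM : 0 < M) (ha : 0 < a) (haM : a < M) :
    StrictAntiOn
      (fun r : ℝ => -(r^3 - 3*M*r^2 + a^2*r + a^2*M) / (a * (r - M)))
      (Set.Icc (2*M*(1 + Real.cos ((2/3) * Real.arccos (-a/M))))
               (2*M*(1 + Real.cos ((2/3) * Real.arccos (a/M))))) := by
  have hr1M : M < 2*M*(1 + Real.cos ((2/3) * Real.arccos (-a/M))) := by
    set θ := Real.arccos (-a/M) with hθ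
    have hlt : -1 < -a/M := by
      have h1 : a/M < 1 := (div_lt_one hM).2 haM
      rw [neg_div]; linarith
    have hθπ : θ < Real.pi := lt_of_le_of_ne (Real.arccos_le_pi _)
      (fun h => absurd (Real.arccos_eq_pi.1 h) (by linarith))
    have hθ0 : 0 ≤ θ := Real.arccos_nonneg _
    have hπ : 0 < Real.pi := Real.pi_pos
    have hmem1 : (2/3 : ℝ) * θ ∈ Set.Icc 0 Real.pi := by
      constructor <;> nlinarith
    have hmem2 : (2*Real.pi/3 : ℝ) ∈ Set.Icc 0 Real.pi := by
      constructor <;> nlinarith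
    have hcos : Real.cos (2*Real.pi/3) < Real.cos ((2/3) * θ) :=
      Real.strictAntiOn_cos hmem1 hmem2 (by nlinarith)
    have hval : Real.cos (2*Real.pi/3) = -(1/2) := by
      rw [show (2*Real.pi/3 : ℝ) = Real.pi - Real.pi/3 by ring,
        Real.cos_pi_sub, Real.cos_pi_div_three]
    rw [hval] at hcos
    nlinarith
  intro x hx y hy hxy
  have hxM : M < x := lt_of_lt_of_le hr1M hx.1
  have hyM : M < y := lt_of_lt_of_le hr1M hy.1
  have hux : 0 < x - M := sub_pos.2 hxM
  have hvy : 0 < y - M := sub_pos.2 hyM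
  have hd : 0 < y - x := sub_pos.2 hxy
  simp only
  rw [div_lt_div_iff₀ (mul_pos ha hvy) (mul_pos ha hux)]
  nlinarith [mul_pos (mul_pos ha hd) (mul_pos (mul_pos hux hvy) (add_pos hux hvy)),
    mul_pos (mul_pos (mul_pos ha hd) hM)
      (mul_pos (sub_pos.2 haM) (by linarith : (0:ℝ) < M + a))]
end

section
/- Let M > 0 and 0 < a < M, and let r̂₁ = 2M(1 + cos((2/3) arccos(−a/M))), r̂₂ = 2M(1 + cos((2/3) arccos(a/M))). Then Q_trap(r) = −r³(r³ − 6Mr² + 9M²r − 4a²M)/(a²(r − M)²) satisfies Q_trap(r̂₁) = 0, Q_trap(r̂₂) = 0, and Q_trap(r) > 0 for all r ∈ (r̂₁, r̂₂). -/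
/-- If `4c³ - 3c = 2(a/M)² - 1` then `2M(1+c)` is a root of the photon-orbit cubic. -/
lemma kerr_cubic_root (M a c : ℝ) (hM : M ≠ 0)
    (h : 4*c^3 - 3*c = 2*(a/M)^2 - 1) :
    (2*M*(1+c))^3 - 6*M*(2*M*(1+c))^2 + 9*M^2*(2*M*(1+c)) - 4*a^2*M = 0 := by
  field_simp at h
  linear_combination 2*M*h

lemma kerr_cos_eq (x : ℝ) (hx1 : -1 ≤ x) (hx2 : x ≤ 1) :
    4 * Real.cos ((2/3) * Real.arccos x) ^ 3 - 3 * Real.cos ((2/3) * Real.arccos x)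
      = 2 * x^2 - 1 := by
  have h3 : (3:ℝ) * ((2/3) * Real.arccos x) = 2 * Real.arccos x := by ring
  have := Real.cos_three_mul ((2/3) * Real.arccos x)
  rw [h3, Real.cos_two_mul, Real.cos_arccos hx1 hx2] at this
  linarith

lemma kerr_cos_gt (x : ℝ) (hx : -1 < x) :
    -(1/2) < Real.cos ((2/3) * Real.arccos x) := by
  have hle : Real.arccos x ≤ Real.pi := Real.arccos_le_pi x
  have hlt : Real.arccos x < Real.pi := by
    rcases lt_or_eq_of_le hle with h | h
    · exact h
    · exact absurd (Real.arccos_eq_pi.mp h) (not_le.mpr hx)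
  have h0 : 0 ≤ (2/3) * Real.arccos x := by
    have := Real.arccos_nonneg x; positivity
  have hψ : (2/3) * Real.arccos x < 2 * Real.pi / 3 := by linarith
  have hc : Real.cos (2 * Real.pi / 3) < Real.cos ((2/3) * Real.arccos x) := by
    apply Real.cos_lt_cos_of_nonneg_of_le_pi h0 _ hψ
    have := Real.pi_pos; linarith
  have : Real.cos (2 * Real.pi / 3) = -(1/2) := by
    rw [show 2 * Real.pi / 3 = Real.pi - Real.pi / 3 by ring, Real.cos_pi_sub,
      Real.cos_pi_div_three]
  linarith [hc, this ▸ hc]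

/-- `Q_trap` vanishes at the endpoints of the spherical photon orbit range
and is positive in its interior. -/
theorem kerr_Q_trap_sign
    (M a : ℝ) (hM : 0 < M) (ha : 0 < a) (haM : a < M)
    (r₁ r₂ : ℝ)
    (hr₁ : r₁ = 2*M*(1 + Real.cos ((2/3) * Real.arccos (-a/M))))
    (hr₂ : r₂ = 2*M*(1 + Real.cos ((2/3) * Real.arccos (a/M))))
    (Qtrap : ℝ → ℝ)
    (hQ : ∀ r, Qtrap r = -(r^3 * (r^3 - 6*M*r^2 + 9*M^2*r - 4*a^2*M))
        / (a^2 * (r - M)^2)) :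
    Qtrap r₁ = 0 ∧ Qtrap r₂ = 0 ∧ ∀ r ∈ Set.Ioo r₁ r₂, 0 < Qtrap r := by
  have hM0 : M ≠ 0 := ne_of_gt hM
  have hb1 : -1 ≤ -a/M := by
    rw [neg_div, neg_le_neg_iff, div_le_one hM]; exact le_of_lt haM
  have hb1' : -a/M ≤ 1 := by
    have : -a/M < 0 := div_neg_of_neg_of_pos (by linarith) hM
    linarith
  have hb2 : -1 ≤ a/M := by
    have : 0 ≤ a/M := by positivity
    linarith
  have hb2' : a/M ≤ 1 := by rw [div_le_one hM]; exact le_of_lt haM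
  -- both endpoints are roots of the cubic
  have hp1 : r₁^3 - 6*M*r₁^2 + 9*M^2*r₁ - 4*a^2*M = 0 := by
    rw [hr₁]
    apply kerr_cubic_root M a _ hM0
    rw [kerr_cos_eq _ hb1 hb1']; ring
  have hp2 : r₂^3 - 6*M*r₂^2 + 9*M^2*r₂ - 4*a^2*M = 0 := by
    rw [hr₂]
    apply kerr_cubic_root M a _ hM0
    rw [kerr_cos_eq _ hb2 hb2']
  -- endpoints exceed M
  have hc1 : -(1/2) < Real.cos ((2/3) * Real.arccos (-a/M)) := by
    apply kerr_cos_gt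
    rw [neg_div, neg_lt_neg_iff, div_lt_one hM]; exact haM
  have hc2 : -(1/2) < Real.cos ((2/3) * Real.arccos (a/M)) := by
    apply kerr_cos_gt
    have : 0 < a/M := by positivity
    linarith
  have hMr₁ : M < r₁ := by rw [hr₁]; nlinarith
  have hMr₂ : M < r₂ := by rw [hr₂]; nlinarith
  refine ⟨?_, ?_, ?_⟩
  · rw [hQ, hp1]; simp
  · rw [hQ, hp2]; simp
  · intro r hr
    obtain ⟨hrl, hrr⟩ := hr
    have hr12 : r₁ < r₂ := lt_trans hrl hrr
    have hne : r₁ - r₂ ≠ 0 := by intro h; linarith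
    -- factorization of the cubic
    set r₀ : ℝ := 6*M - r₁ - r₂ with hr₀
    have hA : r₁^2 + r₁*r₂ + r₂^2 - 6*M*(r₁+r₂) + 9*M^2 = 0 := by
      have hsub : (r₁ - r₂) * (r₁^2 + r₁*r₂ + r₂^2 - 6*M*(r₁+r₂) + 9*M^2) = 0 := by
        linear_combination hp1 - hp2
      rcases mul_eq_zero.mp hsub with h | h
      · exact absurd h hne
      · exact h
    have hfac : ∀ s : ℝ, s^3 - 6*M*s^2 + 9*M^2*s - 4*a^2*M
        = (s - r₁) * (s - r₂) * (s - r₀) := by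
      intro s
      linear_combination (s - r₁) * hA + hp1
    -- third root is below M
    have hpM : (M - r₁) * (M - r₂) * (M - r₀) = 4*M*(M^2 - a^2) := by
      linear_combination (-1 : ℝ) * hfac M
    have hq : 0 < (M - r₁) * (M - r₂) :=
      mul_pos_of_neg_of_neg (by linarith) (by linarith)
    have h4 : 0 < 4*M*(M^2 - a^2) := by nlinarith
    have hr₀M : r₀ < M := by
      by_contra hcon
      push_neg at hcon
      have : (M - r₁) * (M - r₂) * (M - r₀) ≤ 0 :=
        mul_nonpos_of_nonneg_of_nonpos hq.le (by linarith)
      linarith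
    -- sign analysis
    have hrM : M < r := lt_trans hMr₁ hrl
    have hnum : 0 < -(r^3 * (r^3 - 6*M*r^2 + 9*M^2*r - 4*a^2*M)) := by
      rw [hfac r]
      have h1 : 0 < r - r₁ := by linarith
      have h2 : r - r₂ < 0 := by linarith
      have h3 : 0 < r - r₀ := by linarith
      have hr0 : 0 < r := by linarith
      have h13 : 0 < (r - r₁) * (r - r₀) := mul_pos h1 h3
      have hX : (r - r₁) * (r - r₂) * (r - r₀) < 0 := by
        have h := mul_neg_of_pos_of_neg h13 h2
        have he : (r - r₁) * (r - r₂) * (r - r₀) = (r - r₁) * (r - r₀) * (r - r₂) := by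
          ring
        linarith [h, he]
      have hpos : 0 < r^3 * (-((r - r₁) * (r - r₂) * (r - r₀))) :=
        mul_pos (pow_pos hr0 3) (by linarith)
      have he : -(r^3 * ((r - r₁) * (r - r₂) * (r - r₀)))
          = r^3 * (-((r - r₁) * (r - r₂) * (r - r₀))) := by ring
      linarith [hpos, he]
    have hden : 0 < a^2 * (r - M)^2 := by
      have : r - M ≠ 0 := by intro h; nlinarith
      positivity
    rw [hQ]
    exact div_pos hnum hden
end

section
/- Let M > 0 and 0 < a < M. The function Φ_trap(r) = −(r³ − 3Mr² + a²r + a²M)/(a(r − M)) has exactly one zero in the interval [r̂₁, r̂₂] (where r̂₁, r̂₂ are as in the spherical photon orbit range), namely r_m = M + 2√(M² − a²/3)·cos((1/3) arccos(M(M² − a²)/(M² − a²/3)^{3/2})). -/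
open Real
set_option maxHeartbeats 1000000

private lemma kerr_aux_pos (M a : ℝ) (hM : 0 < M) (ha : 0 < a) (haM : a < M) :
    0 < M*(M^2-a^2) := by
  have h1 : 0 < (M-a)*(M+a) := mul_pos (by linarith) (by linarith)
  nlinarith [h1]

private lemma kerr_aux_cube (M a : ℝ) (hM : 0 < M) (ha : 0 < a) (haM : a < M) :
    (M*(M^2-a^2))^2 < (M^2-a^2/3)^3 := by
  have hx : a*a < M*M := mul_self_lt_mul_self ha.le haM
  have h1 : a^2*a^2 ≤ a^2*M^2 := by nlinarith [hx, sq_nonneg a]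
  have h2 : a^2*M^2 < M^2*M^2 := by nlinarith [hx, mul_pos hM hM]
  have hpos2 : 0 < M^4 - (2/3)*M^2*a^2 - a^4/27 := by nlinarith [h1, h2]
  nlinarith [mul_pos (mul_pos ha ha) hpos2]

/-- `Φ_trap` has exactly one zero in the spherical photon orbit range,
namely `r_m`. -/
theorem kerr_Phi_trap_unique_zero
    (M a : ℝ) (hM : 0 < M) (ha : 0 < a) (haM : a < M)
    (r₁ r₂ rm : ℝ)
    (hr₁ : r₁ = 2*M*(1 + Real.cos ((2/3) * Real.arccos (-a/M))))
    (hr₂ : r₂ = 2*M*(1 + Real.cos ((2/3) * Real.arccos (a/M))))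
    (hrm : rm = M + 2 * Real.sqrt (M^2 - a^2/3) *
      Real.cos ((1/3) * Real.arccos (M*(M^2 - a^2) / (M^2 - a^2/3) ^ ((3:ℝ)/2))))
    (Φtrap : ℝ → ℝ)
    (hΦ : ∀ r, Φtrap r = -(r^3 - 3*M*r^2 + a^2*r + a^2*M) / (a * (r - M))) :
    rm ∈ Set.Icc r₁ r₂ ∧ ∀ r ∈ Set.Icc r₁ r₂, (Φtrap r = 0 ↔ r = rm) := by
  have hπ := Real.pi_pos
  have hdivlt : a / M < 1 := (div_lt_one hM).2 haM
  have hdivpos : 0 < a / M := div_pos ha hM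
  have hnd : -a / M = -(a / M) := by ring
  -- ### r₂ > 3M and p(r₂) > 0
  have hB1 : Real.arccos (a/M) < π / 2 := Real.arccos_lt_pi_div_two.2 hdivpos
  have hB0 : 0 ≤ Real.arccos (a/M) := Real.arccos_nonneg _
  have hcosB : 1/2 < Real.cos ((2/3) * Real.arccos (a/M)) := by
    have h := Real.cos_lt_cos_of_nonneg_of_le_pi
      (x := (2/3) * Real.arccos (a/M)) (y := π/3)
      (by positivity) (by linarith) (by linarith)
    rwa [Real.cos_pi_div_three] at h
  have hr₂3M : 3*M < r₂ := by rw [hr₂]; nlinarith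
  have hpr2pos : 0 < r₂^3 - 3*M*r₂^2 + a^2*r₂ + a^2*M := by
    have h1 : 0 < r₂ := by linarith
    nlinarith [mul_pos (mul_pos h1 h1) (show 0 < r₂ - 3*M by linarith),
      mul_pos (mul_pos ha ha) (show 0 < r₂ + M by linarith)]
  -- ### r₁ = 4 M c1², M < r₁, p(r₁) < 0
  have hAeq : Real.arccos (-a/M) = π - Real.arccos (a/M) := by
    rw [hnd, Real.arccos_neg]
  set A := Real.arccos (-a/M) with hA
  have hA2 : π/2 < A := by rw [hAeq]; linarith
  have hA3 : A < π := by
    have := Real.arccos_pos.2 hdivlt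
    rw [hAeq]; linarith
  set c1 := Real.cos (A/3) with hc1
  have hc1l : 1/2 < c1 := by
    have h := Real.cos_lt_cos_of_nonneg_of_le_pi (x := A/3) (y := π/3)
      (by linarith) (by linarith) (by linarith)
    rwa [Real.cos_pi_div_three] at h
  have hc1pos : 0 < c1 := by linarith
  have hc1u : c1 < Real.sqrt 3 / 2 := by
    have h := Real.cos_lt_cos_of_nonneg_of_le_pi (x := π/6) (y := A/3)
      (by linarith) (by linarith) (by linarith)
    rwa [Real.cos_pi_div_six] at h
  have hs3 : Real.sqrt 3 ^ 2 = 3 := Real.sq_sqrt (by norm_num)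
  have h34 : c1^2 < 3/4 := by nlinarith [Real.sqrt_nonneg 3]
  have h14 : 1/4 < c1^2 := by nlinarith
  have hcA : Real.cos A = -a/M := Real.cos_arccos (by rw [hnd]; linarith) (by rw [hnd]; linarith)
  have htriple : Real.cos (3 * (A/3)) = 4 * c1^3 - 3 * c1 := Real.cos_three_mul _
  rw [show 3 * (A/3) = A by ring, hcA] at htriple
  have ha_eq : a = M * (3*c1 - 4*c1^3) := by
    field_simp at htriple; linarith
  have hr1c : r₁ = 4*M*c1^2 := by
    rw [hr₁, show (2/3) * A = 2 * (A/3) by ring, Real.cos_two_mul]; ring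
  have hr1M : M < r₁ := by rw [hr1c]; nlinarith
  have hpr1 : r₁^3 - 3*M*r₁^2 + a^2*r₁ + a^2*M
      = M^3 * c1^2 * (4*c1^2-3) * (4*c1^2+3) * (4*c1^2-1) := by
    rw [hr1c, ha_eq]; ring
  have hpr1neg : r₁^3 - 3*M*r₁^2 + a^2*r₁ + a^2*M < 0 := by
    rw [hpr1]
    have h1 : M^3 * c1^2 * (4*c1^2-3) < 0 :=
      mul_neg_of_pos_of_neg (by positivity) (by linarith)
    have h2 : M^3 * c1^2 * (4*c1^2-3) * (4*c1^2+3) < 0 :=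
      mul_neg_of_neg_of_pos h1 (by linarith)
    exact mul_neg_of_neg_of_pos h2 (by linarith)
  -- ### rm : root of the cubic
  have hqpos : 0 < M^2 - a^2/3 := by nlinarith
  set sq := Real.sqrt (M^2 - a^2/3) with hsqdef
  have hsqpos : 0 < sq := Real.sqrt_pos.2 hqpos
  have hsq2 : sq^2 = M^2 - a^2/3 := Real.sq_sqrt hqpos.le
  have hrpow : (M^2 - a^2/3) ^ ((3:ℝ)/2) = sq^3 := by
    rw [show ((3:ℝ)/2) = (1/2 : ℝ) * ((3:ℕ):ℝ) by norm_num,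
      Real.rpow_mul hqpos.le, Real.rpow_natCast, ← Real.sqrt_eq_rpow]
  rw [hrpow] at hrm
  have hcpos : 0 < M*(M^2-a^2) := kerr_aux_pos M a hM ha haM
  have hsq3pos : 0 < sq^3 := by positivity
  have hratpos : 0 < M*(M^2-a^2) / sq^3 := div_pos hcpos hsq3pos
  have hsqlt : (M*(M^2-a^2))^2 < (sq^3)^2 := by
    have h6 : (sq^3)^2 = (M^2-a^2/3)^3 := by
      rw [show (sq^3)^2 = (sq^2)^3 by ring, hsq2]
    rw [h6]
    exact kerr_aux_cube M a hM ha haM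
  have hratlt1 : M*(M^2-a^2) / sq^3 < 1 := by
    rw [div_lt_one hsq3pos]
    exact lt_of_pow_lt_pow_left₀ 2 hsq3pos.le hsqlt
  set θ := Real.arccos (M*(M^2-a^2) / sq^3) with hθ
  have hθlt : θ < π/2 := Real.arccos_lt_pi_div_two.2 hratpos
  have hθpos : 0 < θ := Real.arccos_pos.2 hratlt1
  have hcosθ : Real.cos θ = M*(M^2-a^2) / sq^3 :=
    Real.cos_arccos (by linarith) hratlt1.le
  set ct := Real.cos ((1/3) * θ) with hct
  have hctl : Real.sqrt 3 / 2 < ct := by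
    have h := Real.cos_lt_cos_of_nonneg_of_le_pi (x := (1/3)*θ) (y := π/6)
      (by linarith) (by linarith) (by linarith)
    rwa [Real.cos_pi_div_six] at h
  have hs3pos : (0:ℝ) < Real.sqrt 3 := Real.sqrt_pos.2 (by norm_num)
  have hctpos : 0 < ct := lt_trans (by positivity) hctl
  have hct2 : 3/4 < ct^2 := by
    have h1 : (Real.sqrt 3/2)^2 < ct^2 := by
      apply pow_lt_pow_left₀ hctl (by positivity)
      norm_num
    have h2 : (Real.sqrt 3/2)^2 = 3/4 := by
      rw [div_pow, Real.sq_sqrt] <;> norm_num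
    linarith
  have htriple2 : Real.cos (3 * ((1/3) * θ)) = 4 * ct^3 - 3 * ct := Real.cos_three_mul _
  rw [show 3 * ((1/3) * θ) = θ by ring, hcosθ] at htriple2
  have hkey : sq^3 * (4*ct^3 - 3*ct) = M*(M^2-a^2) := by
    rw [← htriple2]; field_simp
  have hprm : rm^3 - 3*M*rm^2 + a^2*rm + a^2*M = 0 := by
    have expand : rm^3 - 3*M*rm^2 + a^2*rm + a^2*M
        = 2*(sq^3*(4*ct^3 - 3*ct)) - 2*M*(M^2 - a^2)
          + (2*sq*ct)*(3*sq^2 - (3*M^2 - a^2)) := by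
      rw [hrm]; ring
    rw [expand, hkey, hsq2]; ring
  have hs : rm - M = 2*sq*ct := by rw [hrm]; ring
  -- factorization and positivity of the quadratic factor
  have hfact : ∀ r : ℝ, r^3 - 3*M*r^2 + a^2*r + a^2*M
      = (r - rm) * ((r-M)^2 + (r-M)*(rm-M) + ((rm-M)^2 - (3*M^2 - a^2))) := by
    intro r; linear_combination hprm
  have hQpos : ∀ r : ℝ, M < r →
      0 < (r-M)^2 + (r-M)*(rm-M) + ((rm-M)^2 - (3*M^2 - a^2)) := by
    intro r hr
    rw [hs]
    have h1 : 0 < (r-M)*(2*sq*ct) :=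
      mul_pos (by linarith) (by positivity)
    have h2 : 0 < sq^2 * (4*ct^2 - 3) := mul_pos (by positivity) (by linarith)
    have h3 : (2*sq*ct)^2 - (3*M^2 - a^2) = sq^2 * (4*ct^2 - 3) := by
      linear_combination 3*hsq2
    linarith [sq_nonneg (r-M), h1, h2, h3]
  have hrmM : M < rm := by
    have : 0 < 2*sq*ct := by positivity
    linarith [hs]
  -- membership
  have hmem1 : r₁ ≤ rm := by
    by_contra h
    push_neg at h
    have hQ := hQpos r₁ hr1M
    have := hfact r₁
    linarith [this, hpr1neg, mul_pos (show (0:ℝ) < r₁ - rm by linarith) hQ]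
  have hmem2 : rm ≤ r₂ := by
    by_contra h
    push_neg at h
    have hQ := hQpos r₂ (by linarith)
    have := hfact r₂
    have h4 := mul_pos (show (0:ℝ) < rm - r₂ by linarith) hQ
    have h5 : (rm - r₂) * ((r₂-M)^2 + (r₂-M)*(rm-M) + ((rm-M)^2 - (3*M^2 - a^2)))
        = -((r₂ - rm) * ((r₂-M)^2 + (r₂-M)*(rm-M) + ((rm-M)^2 - (3*M^2 - a^2)))) := by ring
    linarith [this, hpr2pos, h4, h5]
  refine ⟨⟨hmem1, hmem2⟩, ?_⟩
  intro r hr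
  obtain ⟨hra, hrb⟩ := hr
  have hrM : M < r := lt_of_lt_of_le hr1M hra
  have hden : a * (r - M) ≠ 0 := ne_of_gt (mul_pos ha (by linarith))
  rw [hΦ r]
  constructor
  · intro h
    rcases div_eq_zero_iff.1 h with h' | h'
    · have hp : r^3 - 3*M*r^2 + a^2*r + a^2*M = 0 := by linarith [neg_eq_zero.1 h']
      rw [hfact r] at hp
      rcases mul_eq_zero.1 hp with h'' | h''
      · linarith [sub_eq_zero.1 h'']
      · exact absurd h'' (ne_of_gt (hQpos r hrM))
    · exact absurd h' hden
  · intro h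
    subst h
    rw [hprm]
    simp
end

section
/- Let M > 0, 0 < a < M, and r in the spherical photon orbit range [r̂₁, r̂₂]. Then it is impossible that Φ_trap(r) = 0 and Q_trap(r) = 0 simultaneously. -/
/-- `Φ_trap` and `Q_trap` cannot vanish simultaneously on the spherical
photon orbit range. -/
theorem kerr_Phi_Q_trap_not_both_zero
    (M a : ℝ) (hM : 0 < M) (ha : 0 < a) (haM : a < M)
    (r : ℝ)
    (hr : r ∈ Set.Icc (2*M*(1 + Real.cos ((2/3) * Real.arccos (-a/M))))
                      (2*M*(1 + Real.cos ((2/3) * Real.arccos (a/M))))) :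
    ¬ (-(r^3 - 3*M*r^2 + a^2*r + a^2*M) / (a * (r - M)) = 0 ∧
       -(r^3 * (r^3 - 6*M*r^2 + 9*M^2*r - 4*a^2*M)) / (a^2 * (r - M)^2) = 0) := by
  rintro ⟨h1, h2⟩
  -- First: r > M.
  have hx : (-1 : ℝ) < -a/M := by
    rw [neg_div, neg_lt_neg_iff, div_lt_one hM]; exact haM
  have harc_lt : Real.arccos (-a/M) < Real.pi :=
    lt_of_le_of_ne (Real.arccos_le_pi _) (fun h => by
      have := Real.arccos_eq_pi.mp h; linarith)
  have hθ0 : 0 ≤ (2/3) * Real.arccos (-a/M) := by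
    have := Real.arccos_nonneg (-a/M); positivity
  have hθlt : (2/3) * Real.arccos (-a/M) < 2 * Real.pi / 3 := by linarith
  have hcos : Real.cos (2 * Real.pi / 3) < Real.cos ((2/3) * Real.arccos (-a/M)) := by
    apply Real.cos_lt_cos_of_nonneg_of_le_pi hθ0 _ hθlt
    have := Real.pi_pos; linarith
  have hcosval : Real.cos (2 * Real.pi / 3) = -(1/2) := by
    have : (2 : ℝ) * Real.pi / 3 = Real.pi - Real.pi / 3 := by ring
    rw [this, Real.cos_pi_sub, Real.cos_pi_div_three]
  rw [hcosval] at hcos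
  have hrM : M < r := by
    have h := hr.1
    nlinarith [h, hcos]
  -- Denominators are nonzero, so the numerators vanish.
  have hrM' : 0 < r - M := sub_pos.mpr hrM
  have hd1 : a * (r - M) ≠ 0 := by positivity
  have hd2 : a^2 * (r - M)^2 ≠ 0 := by positivity
  have hn1 : r^3 - 3*M*r^2 + a^2*r + a^2*M = 0 := by
    have := (div_eq_zero_iff.mp h1).resolve_right hd1
    linarith [neg_eq_zero.mp this]
  have hr0 : 0 < r := lt_trans hM hrM
  have hn2 : r^3 - 6*M*r^2 + 9*M^2*r - 4*a^2*M = 0 := by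
    have h := (div_eq_zero_iff.mp h2).resolve_right hd2
    have h' : r^3 * (r^3 - 6*M*r^2 + 9*M^2*r - 4*a^2*M) = 0 := by linarith [neg_eq_zero.mp h]
    have hr3 : r^3 ≠ 0 := by positivity
    exact (mul_eq_zero.mp h').resolve_left hr3
  -- Key algebraic identity: r (r-M)(r-3M)(r+3M) = 0.
  have hfact : r * (r - M) * (r - 3*M) * (r + 3*M) = 0 := by
    linear_combination (r + M) * hn2 + 4*M*hn1
  have hr3M : r = 3*M := by
    have h1' : r ≠ 0 := ne_of_gt hr0
    have h2' : r - M ≠ 0 := by linarith [sub_pos.mpr hrM]; 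
    have h3' : r + 3*M ≠ 0 := by positivity
    rcases mul_eq_zero.mp hfact with h | h
    · rcases mul_eq_zero.mp h with h | h
      · rcases mul_eq_zero.mp h with h | h
        · exact absurd h h1'
        · exact absurd h h2'
      · linarith
    · exact absurd h h3'
  -- Then hn1 forces a = 0, contradiction.
  have : 4*a^2*M = 0 := by
    rw [hr3M] at hn1; linarith
  nlinarith [mul_pos (mul_pos ha ha) hM]
end

section
/- Let M > 0, 0 < a < M, and r in the spherical photon orbit range [r̂₁, r̂₂]. Then it is impossible that Q_trap(r) = 0 and Q_trap′(r) = 0 simultaneously. -/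
/-- `Q_trap` and its derivative cannot vanish simultaneously on the
spherical photon orbit range. -/
theorem kerr_Q_trap_simple_zeros
    (M a : ℝ) (hM : 0 < M) (ha : 0 < a) (haM : a < M)
    (r : ℝ)
    (hr : r ∈ Set.Icc (2*M*(1 + Real.cos ((2/3) * Real.arccos (-a/M))))
                      (2*M*(1 + Real.cos ((2/3) * Real.arccos (a/M)))))
    (Qtrap : ℝ → ℝ)
    (hQ : ∀ s, Qtrap s = -(s^3 * (s^3 - 6*M*s^2 + 9*M^2*s - 4*a^2*M))
        / (a^2 * (s - M)^2)) :
    ¬ (Qtrap r = 0 ∧ deriv Qtrap r = 0) := by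
  obtain ⟨hr1, hr2⟩ := hr
  rintro ⟨h0, h1⟩
  -- Step 1 : r > M
  have hπ : (0:ℝ) < Real.pi := Real.pi_pos
  have hθlt : Real.arccos (-a/M) < Real.pi := by
    have hx : (-1:ℝ) < -a/M := by
      rw [neg_div]
      nlinarith [(div_lt_one hM).2 haM]
    have h := Real.neg_pi_div_two_lt_arcsin.2 hx
    rw [Real.arccos]
    linarith
  have hθ0 : 0 ≤ Real.arccos (-a/M) := Real.arccos_nonneg _
  have hcos : Real.cos (2*Real.pi/3) < Real.cos ((2/3) * Real.arccos (-a/M)) := by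
    apply Real.cos_lt_cos_of_nonneg_of_le_pi (by positivity) (by linarith)
    linarith
  have hcosval : Real.cos (2*Real.pi/3) = -(1/2) := by
    have h := Real.cos_pi_sub (Real.pi/3)
    rw [Real.cos_pi_div_three] at h
    rw [show 2*Real.pi/3 = Real.pi - Real.pi/3 by ring, h]
  have hMr : M < r := by
    rw [hcosval] at hcos
    nlinarith
  have hr0 : 0 < r := lt_trans hM hMr
  have hrM : r - M ≠ 0 := by linarith
  have hD : a^2 * (r - M)^2 ≠ 0 :=
    mul_ne_zero (pow_ne_zero 2 (ne_of_gt ha)) (pow_ne_zero 2 hrM)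
  -- Step 2 : derivatives
  have hfun : Qtrap = fun s => -(s^3 * (s^3 - 6*M*s^2 + 9*M^2*s - 4*a^2*M))
      / (a^2 * (s - M)^2) := funext hQ
  have hid : HasDerivAt (fun s : ℝ => s) 1 r := hasDerivAt_id r
  have h3 : HasDerivAt (fun s : ℝ => s^3) (3*r^2) r := by
    simpa using hasDerivAt_pow 3 r
  have h2 : HasDerivAt (fun s : ℝ => s^2) (2*r) r := by
    simpa using hasDerivAt_pow 2 r
  have hP : HasDerivAt (fun s : ℝ => s^3 - 6*M*s^2 + 9*M^2*s - 4*a^2*M)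
      (3*r^2 - 12*M*r + 9*M^2) r := by
    have := (((h3.sub (HasDerivAt.const_mul (6*M) h2)).add
      (HasDerivAt.const_mul (9*M^2) hid)).sub_const (4*a^2*M))
    refine this.congr_deriv ?_
    ring
  have hN : HasDerivAt (fun s : ℝ => -(s^3 * (s^3 - 6*M*s^2 + 9*M^2*s - 4*a^2*M)))
      (-(3*r^2 * (r^3 - 6*M*r^2 + 9*M^2*r - 4*a^2*M) + r^3 * (3*r^2 - 12*M*r + 9*M^2))) r := by
    exact (h3.mul hP).neg
  have hDen : HasDerivAt (fun s : ℝ => a^2 * (s - M)^2) (a^2 * (2*(r-M))) r := by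
    have hsub : HasDerivAt (fun s : ℝ => s - M) 1 r := hid.sub_const M
    have := HasDerivAt.const_mul (a^2) (hsub.pow 2)
    refine this.congr_deriv ?_
    push_cast
    ring
  have hQd : HasDerivAt Qtrap
      (((-(3*r^2 * (r^3 - 6*M*r^2 + 9*M^2*r - 4*a^2*M) + r^3 * (3*r^2 - 12*M*r + 9*M^2)))
          * (a^2 * (r - M)^2)
        - (-(r^3 * (r^3 - 6*M*r^2 + 9*M^2*r - 4*a^2*M))) * (a^2 * (2*(r-M)))) /
        ((a^2 * (r - M)^2)^2)) r := by
    rw [hfun]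
    exact hN.div hDen hD
  -- Step 3 : extract polynomial equations
  have hnum : r^3 * (r^3 - 6*M*r^2 + 9*M^2*r - 4*a^2*M) = 0 := by
    rw [hQ r, div_eq_zero_iff] at h0
    rcases h0 with h | h
    · linarith [neg_eq_zero.mp h]
    · exact absurd h hD
  have hPr : r^3 - 6*M*r^2 + 9*M^2*r - 4*a^2*M = 0 := by
    have hr3 : r^3 ≠ 0 := pow_ne_zero 3 (ne_of_gt hr0)
    exact (mul_eq_zero.mp hnum).resolve_left hr3
  have hder := hQd.deriv
  rw [h1] at hder
  have hDsq : (a^2 * (r - M)^2)^2 ≠ 0 := pow_ne_zero 2 hD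
  have hnum' : (-(3*r^2 * (r^3 - 6*M*r^2 + 9*M^2*r - 4*a^2*M) + r^3 * (3*r^2 - 12*M*r + 9*M^2)))
      * (a^2 * (r - M)^2)
      - (-(r^3 * (r^3 - 6*M*r^2 + 9*M^2*r - 4*a^2*M))) * (a^2 * (2*(r-M))) = 0 := by
    have := hder.symm
    exact (div_eq_zero_iff.mp this).resolve_right hDsq
  rw [hPr] at hnum'
  have hP' : 3*r^2 - 12*M*r + 9*M^2 = 0 := by
    have hmul : r^3 * (3*r^2 - 12*M*r + 9*M^2) * (a^2 * (r - M)^2) = 0 := by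
      nlinarith [hnum']
    have h1' := (mul_eq_zero.mp hmul).resolve_right hD
    have hr3 : r^3 ≠ 0 := pow_ne_zero 3 (ne_of_gt hr0)
    exact (mul_eq_zero.mp h1').resolve_left hr3
  -- Step 4 : conclude r = 3M and contradiction
  have hfac : (r - M) * (r - 3*M) = 0 := by linear_combination hP' / 3
  have hr3M : r = 3*M := by
    rcases mul_eq_zero.mp hfac with h | h
    · exact absurd h hrM
    · linarith
  rw [hr3M] at hPr
  nlinarith [mul_pos (mul_pos ha ha) hM]
end

section
/- Let M > 0, 0 < a < M, Q > 0 and Φ real with a² − Φ² − Q < 0. Suppose C ∈ (−1, 1), C ≠ 0, S² = 1 − C² > 0 satisfy: (i) Q − (Φ²/S² − a²)C² = 0 and (ii) Φ²/S³ + (Φ²/S² − a²)S = 0. Then Φ² + Q·S⁴/C² = 0, hence Φ = 0 and Q = 0, a contradiction; therefore no such C exists. -/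
/-- the degeneracy equations for the latitudinal potential have no
solution with `Q > 0` and `a² − Φ² − Q < 0`. -/
theorem kerr_theta_no_degenerate_point
    (M a Φ Q : ℝ) (hM : 0 < M) (ha : 0 < a) (haM : a < M)
    (hQ : 0 < Q) (hcoeff : a^2 - Φ^2 - Q < 0)
    (C S : ℝ) (hC : C ∈ Set.Ioo (-1 : ℝ) 1) (hC0 : C ≠ 0)
    (hS : S^2 = 1 - C^2) (hSpos : 0 < S^2)
    (h1 : Q - (Φ^2 / S^2 - a^2) * C^2 = 0)
    (h2 : Φ^2 / S^3 + (Φ^2 / S^2 - a^2) * S = 0) :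
    False := by
  have hS0 : S ≠ 0 := by
    intro h; rw [h] at hSpos; norm_num at hSpos
  have hC2 : (0:ℝ) < C^2 := by positivity
  -- clear denominators
  have h1' : Q * S^2 - (Φ^2 - a^2 * S^2) * C^2 = 0 := by
    field_simp at h1; nlinarith [h1]
  have h2' : Φ^2 + (Φ^2 - a^2 * S^2) * S^2 = 0 := by
    field_simp at h2; nlinarith [h2]
  have key : Φ^2 * C^2 + Q * S^2 * S^2 = 0 := by nlinarith [h1', h2', mul_pos hSpos hSpos]
  nlinarith [mul_pos hQ (mul_pos hSpos hSpos), sq_nonneg (Φ*C)]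
end

section
/- Let M > 0 and 0 < a < M. Then r̂₁ = 2M(1 + cos((2/3) arccos(−a/M))) satisfies M + √(M² − a²) < r̂₁ < 3M, and r̂₂ = 2M(1 + cos((2/3) arccos(a/M))) satisfies 3M < r̂₂ < 4M. -/
set_option maxHeartbeats 800000


/-- location of the equatorial circular photon orbit radii. -/
theorem kerr_circular_orbit_radii_bounds
    (M a : ℝ) (hM : 0 < M) (ha : 0 < a) (haM : a < M) :
    (M + Real.sqrt (M^2 - a^2) < 2*M*(1 + Real.cos ((2/3) * Real.arccos (-a/M))) ∧
      2*M*(1 + Real.cos ((2/3) * Real.arccos (-a/M))) < 3*M) ∧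
    (3*M < 2*M*(1 + Real.cos ((2/3) * Real.arccos (a/M))) ∧
      2*M*(1 + Real.cos ((2/3) * Real.arccos (a/M))) < 4*M) := by
  have hπ := Real.pi_pos
  have hx0 : 0 < a / M := div_pos ha hM
  have hx1 : a / M < 1 := (div_lt_one hM).2 haM
  set θ := Real.arccos (-a/M) with hθdef
  have hθeq : θ = Real.arccos (-(a/M)) := by rw [hθdef, neg_div]
  -- bounds on θ
  have hθlt : θ < Real.pi := by
    rw [hθeq, Real.arccos_neg]
    have := Real.arccos_pos.2 hx1
    linarith
  have hθgt : Real.pi / 2 < θ := by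
    rw [hθeq, Real.arccos_neg]
    have := Real.arccos_lt_pi_div_two.2 hx0
    linarith
  -- part 1 upper bound
  have hub1 : Real.cos ((2/3) * θ) < 1/2 := by
    have : Real.cos ((2/3) * θ) < Real.cos (Real.pi / 3) := by
      apply Real.cos_lt_cos_of_nonneg_of_le_pi (by positivity) (by linarith) (by linarith)
    rwa [Real.cos_pi_div_three] at this
  -- part 1 lower bound
  have hcosθ : Real.cos θ = -(a/M) := by
    rw [hθeq]; exact Real.cos_arccos (by linarith) (by linarith)
  have hsinθ : Real.sin θ = Real.sqrt (1 - (a/M)^2) := by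
    rw [hθeq, Real.sin_arccos]; norm_num
  have hsqrt : Real.sqrt (M^2 - a^2) = M * Real.sqrt (1 - (a/M)^2) := by
    rw [show M^2 - a^2 = M^2 * (1 - (a/M)^2) by field_simp,
      Real.sqrt_mul (by positivity), Real.sqrt_sq hM.le]
  set φ := θ / 3 with hφdef
  have hsφ : Real.sin φ < Real.sqrt 3 / 2 := by
    have h1 : Real.sin φ < Real.sin (Real.pi / 3) := by
      apply Real.sin_lt_sin_of_lt_of_le_pi_div_two (by linarith) (by linarith) (by
        rw [hφdef]; linarith)
    rwa [Real.sin_pi_div_three] at h1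
  have hs3 : Real.sin (3 * φ) = 3 * Real.sin φ - 4 * Real.sin φ ^ 3 :=
    Real.sin_three_mul φ
  have hc2 : Real.cos (2 * φ) = 2 * Real.cos φ ^ 2 - 1 := Real.cos_two_mul φ
  have hpyth : Real.sin φ ^ 2 + Real.cos φ ^ 2 = 1 := Real.sin_sq_add_cos_sq φ
  have h3φ : (3 : ℝ) * φ = θ := by rw [hφdef]; ring
  have h2φ : (2/3 : ℝ) * θ = 2 * φ := by rw [hφdef]; ring
  have hsqrt3 : Real.sqrt 3 * Real.sqrt 3 = 3 :=
    Real.mul_self_sqrt (by norm_num)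
  have hkey : Real.sin θ < 1 + 2 * Real.cos ((2/3) * θ) := by
    rw [h2φ, ← h3φ, hs3, hc2]
    have hs0 : 0 ≤ Real.sin φ :=
      Real.sin_nonneg_of_nonneg_of_le_pi (by linarith) (by linarith)
    have hsq : Real.sin φ ^ 2 < 3/4 := by
      have := mul_self_lt_mul_self hs0 hsφ
      nlinarith [hsqrt3]
    have h1 : 0 < 1 - Real.sin φ := by nlinarith
    have h2 : 0 < 3 - 4 * Real.sin φ ^ 2 := by linarith
    nlinarith [mul_pos h1 h2]
  have hlb1 : M + Real.sqrt (M^2 - a^2) < 2*M*(1 + Real.cos ((2/3) * θ)) := by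
    rw [hsqrt, ← hsinθ]
    nlinarith [hkey, hM]
  -- part 2
  set θ' := Real.arccos (a/M) with hθ'def
  have hθ'pos : 0 < θ' := Real.arccos_pos.2 hx1
  have hθ'lt : θ' < Real.pi / 2 := Real.arccos_lt_pi_div_two.2 hx0
  have hc2' : 1/2 < Real.cos ((2/3) * θ') := by
    have : Real.cos (Real.pi / 3) < Real.cos ((2/3) * θ') := by
      apply Real.cos_lt_cos_of_nonneg_of_le_pi (by positivity) (by linarith) (by linarith)
    rwa [Real.cos_pi_div_three] at this
  have hc1' : Real.cos ((2/3) * θ') < 1 := by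
    have : Real.cos ((2/3) * θ') < Real.cos 0 := by
      apply Real.cos_lt_cos_of_nonneg_of_le_pi le_rfl (by linarith) (by positivity)
    rwa [Real.cos_zero] at this
  refine ⟨⟨hlb1, by nlinarith⟩, ⟨by nlinarith, by nlinarith⟩⟩
end

section
/- Let M > 0 and 0 < a < M. For r in the open interval (r̂₁, r̂₂) of spherical photon orbit radii, define for C² ∈ [0, 1) the latitudinal potential Θ̃(r, C) = Q_trap(r) − (Φ_trap(r)²/(1 − C²) − a²)C². Then for each r ∈ (r̂₁, r̂₂) the set {C ∈ (−1,1) : Θ̃(r, C) ≥ 0} is a closed interval [−C_max(r), C_max(r)] symmetric about 0, with 0 < C_max(r) ≤ 1, and C_max(r) = 1 is approached only when Φ_trap(r) = 0. -/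
/-- The trigonometric parametrization `2M(1+cos((2/3) arccos t))` gives a root of the
polar cubic `r³ − 6Mr² + 9M²r − 4(tM)²M`. -/
lemma kerr_cubic_root_aux (M t : ℝ) (ht1 : -1 ≤ t) (ht2 : t ≤ 1) :
    (2*M*(1 + Real.cos ((2/3) * Real.arccos t)))^3
      - 6*M*(2*M*(1 + Real.cos ((2/3) * Real.arccos t)))^2
      + 9*M^2*(2*M*(1 + Real.cos ((2/3) * Real.arccos t)))
      - 4*(t^2*M^2)*M = 0 := by
  set c := Real.cos ((2/3) * Real.arccos t) with hc
  have h3 : Real.cos (3 * ((2/3) * Real.arccos t)) = 4*c^3 - 3*c := Real.cos_three_mul _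
  rw [show (3:ℝ) * ((2/3) * Real.arccos t) = 2 * Real.arccos t by ring,
      Real.cos_two_mul, Real.cos_arccos ht1 ht2] at h3
  linear_combination (-2*M^3) * h3

/-- The third root `6M − A − B` of the polar cubic lies below `A`. -/
lemma kerr_third_root_aux (M A B : ℝ) (hA1 : M < A) (hA3 : A < 3*M) (hB3 : 3*M < B)
    (hkey : A^2 + A*B + B^2 - 6*M*(A+B) + 9*M^2 = 0) : 6*M - A - B < A := by
  by_contra h
  push_neg at h
  have h1 : (B - (6*M - 2*A)) * (B - A) = -3*(A-M)*(A-3*M) := by linear_combination hkey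
  have hpos : 0 < (A - M) * (3*M - A) := mul_pos (by linarith) (by linarith)
  have hle : (B - (6*M - 2*A)) * (B - A) ≤ 0 :=
    mul_nonpos_of_nonpos_of_nonneg (by linarith) (by linarith)
  nlinarith [h1, hpos, hle]

/-- Product of positive, negative, positive factors is negative. -/
lemma kerr_mul3_neg {x y z : ℝ} (hx : 0 < x) (hy : y < 0) (hz : 0 < z) : x*y*z < 0 := by
  have h := mul_pos (mul_pos hx (neg_pos.2 hy)) hz
  nlinarith [h]

lemma kerr_one_sub_sq_pos {C : ℝ} (h1 : -1 < C) (h2 : C < 1) : 0 < 1 - C^2 := by nlinarith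

lemma kerr_abs_le_of_sq_le {C m : ℝ} (hm : 0 < m) (h : C^2 ≤ m^2) : -m ≤ C ∧ C ≤ m :=
  ⟨by nlinarith, by nlinarith⟩

lemma kerr_sq_le_of_abs_le {C m : ℝ} (h1 : -m ≤ C) (h2 : C ≤ m) : C^2 ≤ m^2 := by nlinarith

lemma kerr_nonneg_of_mul {x y : ℝ} (hy : 0 < y) (h : 0 ≤ x * y) : 0 ≤ x := by
  by_contra hx
  push_neg at hx
  nlinarith [mul_pos (neg_pos.2 hx) hy]

/-- Analysis of the latitudinal quadratic `Q(1−x) − Φ²x + a²x(1−x)` for `Φ ≠ 0`: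
it is nonnegative (for `x ≥ 0`) exactly on `[0, u]` for some `u ∈ (0,1)`. -/
lemma kerr_quadratic_aux (a Q Φ : ℝ) (ha : 0 < a) (hQ : 0 < Q) (hΦ : Φ ≠ 0) :
    ∃ u : ℝ, 0 < u ∧ u < 1 ∧
      ∀ x : ℝ, 0 ≤ x → (0 ≤ Q*(1-x) - Φ^2*x + a^2*x*(1-x) ↔ x ≤ u) := by
  have hΦsq : 0 < Φ ^ 2 := lt_of_le_of_ne (sq_nonneg _) (Ne.symm (pow_ne_zero 2 hΦ))
  have ha2 : (0:ℝ) < a^2 := pow_pos ha 2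
  set b := Q + Φ ^ 2 - a^2 with hbdef
  have hDpos : 0 < b^2 + 4*a^2*Q := by nlinarith [sq_nonneg b]
  set s := Real.sqrt (b^2 + 4*a^2*Q) with hsdef
  have hs2 : s^2 = b^2 + 4*a^2*Q := Real.sq_sqrt hDpos.le
  have hspos : 0 < s := Real.sqrt_pos.2 hDpos
  have hsb : b < s := by nlinarith
  have hsnb : -b < s := by nlinarith
  have hs2ab : s < 2*a^2 + b := by nlinarith
  set u := (s - b)/(2*a^2) with hudef
  have h2a2 : (0:ℝ) < 2*a^2 := by positivity
  have hu0 : 0 < u := div_pos (by linarith) h2a2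
  have hu1 : u < 1 := (div_lt_one h2a2).2 (by linarith)
  have hu_eq : 2*a^2*u = s - b := by
    rw [hudef]; field_simp
  have huroot : a^2*u^2 + b*u = Q := by
    have h4 : (2*a^2*u)^2 + 2*b*(2*a^2*u) - 4*a^2*Q = 0 := by
      rw [hu_eq]; linear_combination hs2
    nlinarith [h4]
  have hub : 0 < a^2*u + b := by nlinarith [hu_eq]
  refine ⟨u, hu0, hu1, fun x hx => ?_⟩
  have hPfac : Q*(1-x) - Φ^2*x + a^2*x*(1-x) = -((x - u) * (a^2*(x + u) + b)) := by
    linear_combination -huroot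
  have hfac2 : 0 < a^2*(x + u) + b := by nlinarith [mul_nonneg ha2.le hx]
  rw [hPfac]
  constructor
  · intro h
    nlinarith [h, hfac2]
  · intro h
    have : 0 ≤ (u - x) * (a^2*(x + u) + b) := mul_nonneg (by linarith) hfac2.le
    nlinarith [this]

/-- for each spherical photon orbit radius, the accessible latitudes form
a closed symmetric interval `[−C_max, C_max]`, reaching the axis only for vanishing
angular momentum. -/
theorem kerr_latitudinal_range
    (M a : ℝ) (hM : 0 < M) (ha : 0 < a) (haM : a < M)
    (Φtrap Qtrap : ℝ → ℝ)
    (hΦ : ∀ r, Φtrap r = -(r^3 - 3*M*r^2 + a^2*r + a^2*M) / (a * (r - M)))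
    (hQ : ∀ r, Qtrap r = -(r^3 * (r^3 - 6*M*r^2 + 9*M^2*r - 4*a^2*M))
        / (a^2 * (r - M)^2))
    (Θ : ℝ → ℝ → ℝ)
    (hΘ : ∀ r C, Θ r C = Qtrap r - (Φtrap r ^ 2 / (1 - C^2) - a^2) * C^2)
    (r : ℝ)
    (hr : r ∈ Set.Ioo (2*M*(1 + Real.cos ((2/3) * Real.arccos (-a/M))))
                      (2*M*(1 + Real.cos ((2/3) * Real.arccos (a/M))))) :
    ∃ Cmax : ℝ, 0 < Cmax ∧ Cmax ≤ 1 ∧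
      {C : ℝ | C ∈ Set.Ioo (-1 : ℝ) 1 ∧ 0 ≤ Θ r C}
        = Set.Icc (-Cmax) Cmax ∩ Set.Ioo (-1 : ℝ) 1 ∧
      (Cmax = 1 → Φtrap r = 0) := by
  obtain ⟨hrA, hrB⟩ := hr
  set A := 2*M*(1 + Real.cos ((2/3) * Real.arccos (-a/M))) with hAdef
  set B := 2*M*(1 + Real.cos ((2/3) * Real.arccos (a/M))) with hBdef
  have haM1 : a/M < 1 := (div_lt_one hM).2 haM
  have haM0 : 0 < a/M := div_pos ha hM
  have haMm1 : (-1:ℝ) ≤ -a/M := by rw [neg_div]; linarith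
  have haMle1 : -a/M ≤ 1 := by rw [neg_div]; linarith
  have hpi := Real.pi_pos
  clear_value A B
  -- cubic root equations
  have hA0 : A^3 - 6*M*A^2 + 9*M^2*A - 4*a^2*M = 0 := by
    have h := kerr_cubic_root_aux M (-a/M) haMm1 haMle1
    have ht : (-a/M)^2 * M^2 = a^2 := by field_simp
    rw [ht] at h
    rw [hAdef]
    exact h
  have hB0 : B^3 - 6*M*B^2 + 9*M^2*B - 4*a^2*M = 0 := by
    have h := kerr_cubic_root_aux M (a/M) (by linarith) haM1.le
    have ht : (a/M)^2 * M^2 = a^2 := by field_simp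
    rw [ht] at h
    rw [hBdef]
    exact h
  -- bounds on the cosines
  have hθ2a : 0 < Real.arccos (a/M) := Real.arccos_pos.2 haM1
  have hθ2b : Real.arccos (a/M) < Real.pi/2 := Real.arccos_lt_pi_div_two.2 haM0
  have hθ1 : Real.arccos (-a/M) = Real.pi - Real.arccos (a/M) := by
    rw [neg_div, Real.arccos_neg]
  have hcos23 : Real.cos (2*Real.pi/3) = -(1/2) := by
    rw [show (2*Real.pi/3 : ℝ) = Real.pi - Real.pi/3 by ring, Real.cos_pi_sub,
      Real.cos_pi_div_three]
  have hc1lb : -(1/2:ℝ) < Real.cos ((2/3) * Real.arccos (-a/M)) := by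
    rw [← hcos23]
    apply Real.cos_lt_cos_of_nonneg_of_le_pi
      (mul_nonneg (by norm_num) (Real.arccos_nonneg _)) (by linarith)
    rw [hθ1]; linarith
  have hc1ub : Real.cos ((2/3) * Real.arccos (-a/M)) < 1/2 := by
    rw [← Real.cos_pi_div_three]
    apply Real.cos_lt_cos_of_nonneg_of_le_pi (by positivity)
    · rw [hθ1]; linarith [Real.arccos_nonneg (a/M)]
    · rw [hθ1]; linarith
  have hc2lb : (1/2:ℝ) < Real.cos ((2/3) * Real.arccos (a/M)) := by
    rw [← Real.cos_pi_div_three]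
    apply Real.cos_lt_cos_of_nonneg_of_le_pi
      (mul_nonneg (by norm_num) (Real.arccos_nonneg _)) (by linarith) (by linarith)
  have hc2ub : Real.cos ((2/3) * Real.arccos (a/M)) < 1 := by
    rw [← Real.cos_zero]
    apply Real.cos_lt_cos_of_nonneg_of_le_pi le_rfl (by linarith)
      (mul_pos (by norm_num) hθ2a)
  -- bounds on the photon sphere radii
  have hA1 : M < A := by
    rw [hAdef]
    have h := mul_pos hM (by linarith : (0:ℝ) < 1 + 2*Real.cos ((2/3) * Real.arccos (-a/M)))
    linarith
  have hA3 : A < 3*M := by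
    rw [hAdef]
    have h := mul_pos hM (by linarith : (0:ℝ) < 1 - 2*Real.cos ((2/3) * Real.arccos (-a/M)))
    linarith
  have hB3 : 3*M < B := by
    rw [hBdef]
    have h := mul_pos hM (by linarith : (0:ℝ) < 2*Real.cos ((2/3) * Real.arccos (a/M)) - 1)
    linarith
  have hB4 : B < 4*M := by
    rw [hBdef]
    have h := mul_pos hM (by linarith : (0:ℝ) < 1 - Real.cos ((2/3) * Real.arccos (a/M)))
    linarith
  have hrM : M < r := by linarith
  have hr0 : 0 < r := by linarith
  -- key quadratic relation between the two roots
  have hfac : (A - B) * (A^2 + A*B + B^2 - 6*M*(A+B) + 9*M^2) = 0 := by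
    linear_combination hA0 - hB0
  have hABne : A - B ≠ 0 := by intro h; linarith
  have hkey : A^2 + A*B + B^2 - 6*M*(A+B) + 9*M^2 = 0 :=
    (mul_eq_zero.1 hfac).resolve_left hABne
  have hC3A : 6*M - A - B < A := kerr_third_root_aux M A B hA1 hA3 hB3 hkey
  -- factorization of the cubic and negativity on (A, B)
  have hgfac : r^3 - 6*M*r^2 + 9*M^2*r - 4*a^2*M
      = (r - A)*(r - B)*(r - (6*M - A - B)) := by
    linear_combination (r - A) * hkey + hA0
  have hgneg : r^3 - 6*M*r^2 + 9*M^2*r - 4*a^2*M < 0 := by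
    rw [hgfac]
    exact kerr_mul3_neg (by linarith) (by linarith) (by linarith)
  -- positivity of Carter constant
  have hQpos : 0 < Qtrap r := by
    rw [hQ]
    apply div_pos
    · have hnum : -(r^3 * (r^3 - 6*M*r^2 + 9*M^2*r - 4*a^2*M))
          = r^3 * (-(r^3 - 6*M*r^2 + 9*M^2*r - 4*a^2*M)) := by ring
      rw [hnum]
      exact mul_pos (pow_pos hr0 3) (by linarith)
    · exact mul_pos (pow_pos ha 2) (pow_pos (by linarith : (0:ℝ) < r - M) 2)
  -- main dichotomy on the angular momentum
  by_cases hΦ0 : Φtrap r = 0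
  · refine ⟨1, one_pos, le_refl 1, ?_, fun _ => hΦ0⟩
    ext C
    simp only [Set.mem_setOf_eq, Set.mem_inter_iff, Set.mem_Icc, Set.mem_Ioo]
    constructor
    · rintro ⟨h1, _⟩
      exact ⟨⟨by linarith [h1.1], by linarith [h1.2]⟩, h1⟩
    · rintro ⟨_, h2⟩
      refine ⟨h2, ?_⟩
      rw [hΘ, hΦ0]
      have hgoal : Qtrap r - ((0:ℝ)^2/(1-C^2) - a^2)*C^2 = Qtrap r + (a*C)^2 := by
        norm_num; ring
      rw [hgoal]
      linarith [sq_nonneg (a*C)]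
  · -- nonzero angular momentum: the maximal latitude is strictly inside (0,1)
    obtain ⟨u, hu0, hu1, hiff⟩ := kerr_quadratic_aux a (Qtrap r) (Φtrap r) ha hQpos hΦ0
    set Cmax := Real.sqrt u with hCdef
    have hCmax0 : 0 < Cmax := Real.sqrt_pos.2 hu0
    have hCmaxsq : Cmax^2 = u := Real.sq_sqrt hu0.le
    have hCmax1 : Cmax < 1 := by
      rw [show (1:ℝ) = Real.sqrt 1 from (Real.sqrt_one).symm, hCdef]
      exact Real.sqrt_lt_sqrt hu0.le (by linarith)
    refine ⟨Cmax, hCmax0, hCmax1.le, ?_, fun h => absurd h (ne_of_lt hCmax1)⟩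
    ext C
    simp only [Set.mem_setOf_eq, Set.mem_inter_iff, Set.mem_Icc, Set.mem_Ioo]
    constructor
    · rintro ⟨hC, hΘpos⟩
      have h1C : (0:ℝ) < 1 - C^2 := kerr_one_sub_sq_pos hC.1 hC.2
      have key : Qtrap r * (1 - C^2) - Φtrap r ^ 2 * C^2 + a^2*C^2*(1-C^2)
          = Θ r C * (1 - C^2) := by
        rw [hΘ]; field_simp; ring
      have hP : 0 ≤ Qtrap r * (1 - C^2) - Φtrap r ^ 2 * C^2 + a^2*C^2*(1-C^2) := by
        rw [key]; exact mul_nonneg hΘpos h1C.le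
      have hCu : C^2 ≤ u := (hiff (C^2) (sq_nonneg C)).1 hP
      have hCsq : C^2 ≤ Cmax^2 := by rw [hCmaxsq]; exact hCu
      exact ⟨kerr_abs_le_of_sq_le hCmax0 hCsq, hC⟩
    · rintro ⟨⟨hm, hp⟩, hC⟩
      refine ⟨hC, ?_⟩
      have h1C : (0:ℝ) < 1 - C^2 := kerr_one_sub_sq_pos hC.1 hC.2
      have hCu : C^2 ≤ u := by
        rw [← hCmaxsq]; exact kerr_sq_le_of_abs_le hm hp
      have key : Qtrap r * (1 - C^2) - Φtrap r ^ 2 * C^2 + a^2*C^2*(1-C^2)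
          = Θ r C * (1 - C^2) := by
        rw [hΘ]; field_simp; ring
      have hP : 0 ≤ Θ r C * (1 - C^2) := by
        rw [← key]; exact (hiff (C^2) (sq_nonneg C)).2 hCu
      exact kerr_nonneg_of_mul h1C hP
end
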